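/- (Case 2) Let g^{(1)},…,g^{(n)} ∈ ℝ^D be arbitrary per-sample gradients with average ḡ = (1/n)Σ_{i=1}^n g^{(i)}, let H̄^diag ∈ ℝ^{D×D} be any diagonal matrix, and let ỹ ∈ ℝ^D. For every X ∈ ℝ^{D×n} with all rows non-constant and row-wise standardization Y(X) with columns y^{(i)}, the Fréchet derivatives with respect to X of both X ↦ Σ_{i=1}^n (y^{(i)} − ỹ)ᵀ ḡ and X ↦ (1/2)Σ_{i=1}^n (y^{(i)}−ỹ)ᵀ H̄^diag (y^{(i)}−ỹ) are zero; i.e., the average gradient and the diagonal of the average Hessian over the mini-batch cannot pass their influence through the batch-normalization standardization phase. -/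

import Mathlib

open scoped BigOperators

/-- Mini-batch mean of a feature dimension across `n` samples. -/
noncomputable def bmean {n : ℕ} (x : Fin n → ℝ) : ℝ := (∑ i, x i) / n

/-- Mini-batch standard deviation of a feature dimension across `n` samples. -/
noncomputable def bstd {n : ℕ} (x : Fin n → ℝ) : ℝ :=
  Real.sqrt ((∑ i, (x i - bmean x) ^ 2) / n)

/-- `x` is non-constant: it differs from the constant vector of its mean. -/
def NonConstant {n : ℕ} (x : Fin n → ℝ) : Prop := x ≠ fun _ => bmean x

/-- The batch-normalization standardization phase (with ε = 0). -/
noncomputable def standardize {n : ℕ} (x : Fin n → ℝ) : Fin n → ℝ :=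
  fun i => (x i - bmean x) / bstd x

lemma sum_sub_mean {n : ℕ} (hn : 0 < n) (x : Fin n → ℝ) :
    ∑ i, (x i - bmean x) = 0 := by
  rw [Finset.sum_sub_distrib, Finset.sum_const, Finset.card_fin, bmean, nsmul_eq_mul]
  have h : (n : ℝ) ≠ 0 := Nat.cast_ne_zero.mpr hn.ne'
  field_simp
  ring

lemma sum_standardize {n : ℕ} (hn : 0 < n) (x : Fin n → ℝ) :
    ∑ i, standardize x i = 0 := by
  unfold standardize
  rw [← Finset.sum_div, sum_sub_mean hn, zero_div]

lemma sq_sum_pos {n : ℕ} {x : Fin n → ℝ} (h : NonConstant x) :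
    0 < ∑ i, (x i - bmean x) ^ 2 := by
  obtain ⟨i, hi⟩ := Function.ne_iff.mp h
  refine Finset.sum_pos' (fun j _ => sq_nonneg _) ⟨i, Finset.mem_univ i, ?_⟩
  have : x i - bmean x ≠ 0 := sub_ne_zero.mpr hi
  positivity

lemma bstd_pos {n : ℕ} (hn : 0 < n) {x : Fin n → ℝ} (h : NonConstant x) :
    0 < bstd x := by
  have hN : (0:ℝ) < n := Nat.cast_pos.mpr hn
  exact Real.sqrt_pos.mpr (div_pos (sq_sum_pos h) hN)

lemma sum_standardize_sq {n : ℕ} (hn : 0 < n) {x : Fin n → ℝ} (h : NonConstant x) :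
    ∑ i, (standardize x i) ^ 2 = n := by
  have hσ := bstd_pos hn h
  have hN : (0:ℝ) < n := Nat.cast_pos.mpr hn
  have hσ2 : (bstd x) ^ 2 = (∑ i, (x i - bmean x) ^ 2) / n := by
    rw [bstd, Real.sq_sqrt (div_nonneg (Finset.sum_nonneg fun i _ => sq_nonneg _) hN.le)]
  unfold standardize
  simp only [div_pow]
  rw [← Finset.sum_div, hσ2, div_div_eq_mul_div, mul_comm, mul_div_assoc,
    div_self (sq_sum_pos h).ne', mul_one]

lemma sum_sq_shift {n : ℕ} (hn : 0 < n) {x : Fin n → ℝ} (h : NonConstant x) (t : ℝ) :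
    ∑ i, (standardize x i - t) ^ 2 = n * (1 + t ^ 2) := by
  have h1 := sum_standardize hn x
  have h2 := sum_standardize_sq hn h
  have : ∀ i : Fin n, (standardize x i - t) ^ 2
      = (standardize x i) ^ 2 - 2 * t * standardize x i + t ^ 2 := fun i => by ring
  simp only [this]
  rw [Finset.sum_add_distrib, Finset.sum_sub_distrib, ← Finset.mul_sum, h1, h2,
    Finset.sum_const, Finset.card_fin, nsmul_eq_mul]
  ring

lemma nonconstant_open {n : ℕ} : IsOpen {x : Fin n → ℝ | NonConstant x} := by
  have hb : Continuous (fun x : Fin n → ℝ => bmean x) := by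
    exact (continuous_finset_sum _ fun i _ => continuous_apply i).div_const _
  exact isOpen_ne_fun continuous_id (continuous_pi fun _ => hb)

/-- Case 2: for per-sample gradients `g⁽ⁱ⁾` with average
`ḡ = (1/n)Σᵢ g⁽ⁱ⁾` and any diagonal matrix `H̄^diag`, at every `X` with all rows
non-constant both `X ↦ Σᵢ (y⁽ⁱ⁾ − ỹ)ᵀ ḡ` and
`X ↦ (1/2)Σᵢ (y⁽ⁱ⁾ − ỹ)ᵀ H̄^diag (y⁽ⁱ⁾ − ỹ)` have vanishing Fréchet derivative. -/
theorem case2_average_blindness (D n : ℕ) (hD : 1 ≤ D) (hn : 2 ≤ n)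
    (g : Fin n → Fin D → ℝ) (Hbardiag : Matrix (Fin D) (Fin D) ℝ)
    (hHbardiag : Hbardiag.IsDiag) (ytil : Fin D → ℝ) :
    ∀ X : Fin D → Fin n → ℝ, (∀ d, NonConstant (X d)) →
      HasFDerivAt
        (fun Z : Fin D → Fin n → ℝ =>
          ∑ i, ∑ e, (standardize (Z e) i - ytil e) * ((∑ k, g k e) / n))
        (0 : (Fin D → Fin n → ℝ) →L[ℝ] ℝ) X ∧
      HasFDerivAt
        (fun Z : Fin D → Fin n → ℝ =>
          (1 / 2 : ℝ) * ∑ i, ∑ j, ∑ k,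
            (standardize (Z j) i - ytil j) * Hbardiag j k * (standardize (Z k) i - ytil k))
        (0 : (Fin D → Fin n → ℝ) →L[ℝ] ℝ) X := by
  have hn0 : 0 < n := by omega
  intro X hX
  constructor
  · have heq : (fun Z : Fin D → Fin n → ℝ =>
        ∑ i, ∑ e, (standardize (Z e) i - ytil e) * ((∑ k, g k e) / n))
        = fun _ => ∑ e, (0 - (n : ℝ) * ytil e) * ((∑ k, g k e) / n) := by
      funext Z
      rw [Finset.sum_comm]
      refine Finset.sum_congr rfl fun e _ => ?_
      rw [← Finset.sum_mul, Finset.sum_sub_distrib, sum_standardize hn0 (Z e),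
        Finset.sum_const, Finset.card_fin, nsmul_eq_mul]
    rw [heq]
    exact hasFDerivAt_const _ _
  · set C : ℝ := (1 / 2 : ℝ) * ∑ j, Hbardiag j j * ((n : ℝ) * (1 + ytil j ^ 2)) with hC
    have hval : ∀ Z : Fin D → Fin n → ℝ, (∀ d, NonConstant (Z d)) →
        ((1 / 2 : ℝ) * ∑ i, ∑ j, ∑ k,
          (standardize (Z j) i - ytil j) * Hbardiag j k * (standardize (Z k) i - ytil k)) = C := by
      intro Z hZ
      have hdiag : ∀ i : Fin n, ∀ j : Fin D,
          (∑ k, (standardize (Z j) i - ytil j) * Hbardiag j k * (standardize (Z k) i - ytil k))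
          = Hbardiag j j * (standardize (Z j) i - ytil j) ^ 2 := by
        intro i j
        rw [Finset.sum_eq_single_of_mem j (Finset.mem_univ j)]
        · ring
        · intro k _ hk
          rw [hHbardiag (Ne.symm hk), mul_zero, zero_mul]
      simp only [hdiag]
      rw [Finset.sum_comm, hC]
      congr 1
      refine Finset.sum_congr rfl fun j _ => ?_
      rw [← Finset.mul_sum, sum_sq_shift hn0 (hZ j) (ytil j)]
    have hopen : IsOpen {Z : Fin D → Fin n → ℝ | ∀ d, NonConstant (Z d)} := by
      have : {Z : Fin D → Fin n → ℝ | ∀ d, NonConstant (Z d)}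
          = ⋂ d, (fun Z : Fin D → Fin n → ℝ => Z d) ⁻¹' {x | NonConstant x} := by
        ext Z; simp
      rw [this]
      exact isOpen_iInter_of_finite fun d => nonconstant_open.preimage (continuous_apply d)
    have hev : (fun Z : Fin D → Fin n → ℝ =>
        (1 / 2 : ℝ) * ∑ i, ∑ j, ∑ k,
          (standardize (Z j) i - ytil j) * Hbardiag j k * (standardize (Z k) i - ytil k))
        =ᶠ[nhds X] fun _ => C := by
      filter_upwards [hopen.mem_nhds hX] with Z hZ using hval Z hZ
    exact (hasFDerivAt_const C X).congr_of_eventuallyEq hev
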